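/- Let A be a commutative unital ring and M an A-module endowed with a filtration {M_n : n ≥ −1}, i.e., an increasing sequence of A-submodules with M_{−1} = 0 and M = ⋃_{n≥0} M_n. Suppose f ∈ A is non-nilpotent and satisfies f·M_n ⊆ M_{n−1} for every n ≥ 0 for which the quotient A-module M_n/M_{n−1} is not free. Then the localized module M_f = A_f ⊗_A M is a free A_f-module. -/

import Mathlib

theorem free_of_filtration {R N : Type*} [CommRing R] [AddCommGroup N] [Module R N]
    (F : ℕ → Submodule R N) (hbot : F 0 = ⊥) (hmono : Monotone F) (hsup : ⨆ n, F n = ⊤)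
    (hfree : ∀ n, Module.Free R (↥(F (n + 1)) ⧸ (F n).comap (F (n + 1)).subtype)) :
    Module.Free R N := by
  classical
  letI Q : ℕ → Type _ := fun n => ↥(F (n + 1)) ⧸ (F n).comap (F (n + 1)).subtype
  letI : ∀ n, Module.Free R (Q n) := hfree
  let ι : ℕ → Type _ := fun n => Module.Free.ChooseBasisIndex R (Q n)
  let b : ∀ n, Module.Basis (ι n) R (Q n) := fun n => Module.Free.chooseBasis R (Q n)
  have hsurj : ∀ n (i : ι n), ∃ x : ↥(F (n + 1)), (Submodule.Quotient.mk x : Q n) = b n i :=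
    fun n i => Submodule.Quotient.mk_surjective _ (b n i)
  choose v hv using hsurj
  let w : (Σ n, ι n) → N := fun j => (v j.1 j.2 : N)
  have hwmem : ∀ j : Σ n, ι n, w j ∈ F (j.1 + 1) := fun j => (v j.1 j.2).2
  -- spanning
  have hspan : ∀ n, F n ≤ Submodule.span R (Set.range w) := by
    intro n
    induction n with
    | zero => rw [hbot]; exact bot_le
    | succ n ih =>
      intro x hx
      set x' : ↥(F (n + 1)) := ⟨x, hx⟩ with hx'
      set c := (b n).repr (Submodule.Quotient.mk x') with hc
      set y : ↥(F (n + 1)) := ∑ i ∈ c.support, c i • v n i with hy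
      have hqy : (Submodule.Quotient.mk y : Q n) = Submodule.Quotient.mk x' := by
        have h1 : (Submodule.Quotient.mk y : Q n)
            = ∑ i ∈ c.support, c i • (Submodule.Quotient.mk (v n i) : Q n) := by
          rw [hy, ← Submodule.mkQ_apply, map_sum]
          simp [Submodule.mkQ_apply]
        rw [h1]
        simp only [hv]
        conv_rhs => rw [← (b n).linearCombination_repr (Submodule.Quotient.mk x')]
        rw [Finsupp.linearCombination_apply, Finsupp.sum, ← hc]
      have hmem : ((x' - y : ↥(F (n + 1))) : N) ∈ F n := by
        have : (Submodule.Quotient.mk (x' - y) : Q n) = 0 := by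
          rw [Submodule.Quotient.mk_sub, hqy, sub_self]
        exact Submodule.mem_comap.mp ((Submodule.Quotient.mk_eq_zero _).mp this)
      have hyval : (y : N) ∈ Submodule.span R (Set.range w) := by
        have : (y : N) = ∑ i ∈ c.support, c i • w ⟨n, i⟩ := by
          rw [hy]; push_cast; rfl
        rw [this]
        exact Submodule.sum_mem _ fun i _ =>
          Submodule.smul_mem _ _ (Submodule.subset_span ⟨⟨n, i⟩, rfl⟩)
      have : x = ((x' - y : ↥(F (n + 1))) : N) + (y : N) := by
        push_cast; abel
      rw [this]
      exact add_mem (ih hmem) hyval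
  -- linear independence
  have key : ∀ n : ℕ, ∀ (s : Finset (Σ k, ι k)) (g : (Σ k, ι k) → R),
      (∀ j ∈ s, j.1 < n) → ∑ j ∈ s, g j • w j = 0 → ∀ j ∈ s, g j = 0 := by
    intro n
    induction n with
    | zero => exact fun s g hs _ j hj => absurd (hs j hj) (Nat.not_lt_zero _)
    | succ n ih =>
      intro s g hs hsum
      set t : Finset (ι n) := s.preimage (Sigma.mk n)
        (Set.injOn_of_injective sigma_mk_injective) with ht
      have hs_hi : s.filter (fun j => j.1 = n) = t.image (Sigma.mk n) := by
        ext j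
        simp only [Finset.mem_filter, Finset.mem_image, ht, Finset.mem_preimage]
        constructor
        · rintro ⟨hj, hj1⟩
          obtain ⟨k, i⟩ := j
          cases hj1
          exact ⟨i, hj, rfl⟩
        · rintro ⟨i, hi, rfl⟩
          exact ⟨hi, rfl⟩
      have hsplit := Finset.sum_filter_add_sum_filter_not s (fun j => j.1 = n)
        (fun j => g j • w j)
      rw [hsum] at hsplit
      have hlo : ∑ j ∈ s.filter (fun j => ¬ j.1 = n), g j • w j ∈ F n :=
        Submodule.sum_mem _ fun j hj => by
          obtain ⟨hjs, hjn⟩ := Finset.mem_filter.mp hj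
          have : j.1 + 1 ≤ n := Nat.lt_of_le_of_ne (Nat.lt_succ_iff.mp (hs j hjs)) hjn
          exact Submodule.smul_mem _ _ (hmono this (hwmem j))
      have hhi_eq : ∑ j ∈ s.filter (fun j => j.1 = n), g j • w j
          = ∑ i ∈ t, g ⟨n, i⟩ • w ⟨n, i⟩ := by
        rw [hs_hi, Finset.sum_image (fun i _ i' _ h => sigma_mk_injective h)]
      have hhi_mem : ∑ i ∈ t, g ⟨n, i⟩ • w ⟨n, i⟩ ∈ F n := by
        rw [← hhi_eq]
        have : ∑ j ∈ s.filter (fun j => j.1 = n), g j • w j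
            = - ∑ j ∈ s.filter (fun j => ¬ j.1 = n), g j • w j := by
          exact eq_neg_of_add_eq_zero_left hsplit
        rw [this]; exact neg_mem hlo
      -- lift to F (n+1)
      set z : ↥(F (n + 1)) := ∑ i ∈ t, g ⟨n, i⟩ • v n i with hz
      have hzval : (z : N) = ∑ i ∈ t, g ⟨n, i⟩ • w ⟨n, i⟩ := by
        rw [hz]; push_cast; rfl
      have hzmem : (z : N) ∈ F n := hzval ▸ hhi_mem
      have hqz : (Submodule.Quotient.mk z : Q n) = 0 :=
        (Submodule.Quotient.mk_eq_zero _).mpr hzmem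
      have hbz : ∑ i ∈ t, g ⟨n, i⟩ • b n i = 0 := by
        have : (Submodule.Quotient.mk z : Q n) = ∑ i ∈ t, g ⟨n, i⟩ • b n i := by
          rw [hz, ← Submodule.mkQ_apply, map_sum]
          simp [Submodule.mkQ_apply, hv]
        rw [← this, hqz]
      have htop : ∀ i ∈ t, g ⟨n, i⟩ = 0 :=
        linearIndependent_iff'.mp (b n).linearIndependent t _ hbz
      have hhi_zero : ∑ j ∈ s.filter (fun j => j.1 = n), g j • w j = 0 := by
        rw [hhi_eq]
        exact Finset.sum_eq_zero fun i hi => by rw [htop i hi, zero_smul]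
      have hlo_zero : ∑ j ∈ s.filter (fun j => ¬ j.1 = n), g j • w j = 0 := by
        rw [hhi_zero, zero_add] at hsplit; exact hsplit
      have hlow := ih (s.filter (fun j => ¬ j.1 = n)) g
        (fun j hj => by
          obtain ⟨hjs, hjn⟩ := Finset.mem_filter.mp hj
          exact Nat.lt_of_le_of_ne (Nat.lt_succ_iff.mp (hs j hjs)) hjn)
        hlo_zero
      intro j hj
      by_cases hjn : j.1 = n
      · obtain ⟨k, i⟩ := j
        cases hjn
        have : i ∈ t := Finset.mem_preimage.mpr hj
        exact htop i this
      · exact hlow j (Finset.mem_filter.mpr ⟨hj, hjn⟩)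
  have hli : LinearIndependent R w := by
    rw [linearIndependent_iff']
    intro s g hsum j hj
    exact key ((s.sup fun j => j.1) + 1) s g
      (fun j hj => Nat.lt_succ_of_le (Finset.le_sup (f := fun j => j.1) hj)) hsum j hj
  have hspan' : ⊤ ≤ Submodule.span R (Set.range w) := by
    rw [← hsup]
    exact iSup_le hspan
  exact Module.Free.of_basis (Module.Basis.mk hli hspan')


/-- Let `A` be a commutative ring and `M` an `A`-module with a filtration
`{M_n : n ≥ -1}` (an increasing sequence of submodules with `M₋₁ = 0` and
`M = ⋃ M_n`); here `F (n+1)` plays the role of `M_n` and `F 0 = ⊥` is `M₋₁`.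
Suppose `f ∈ A` is non-nilpotent and `f • M_n ⊆ M_{n-1}` whenever the quotient
`M_n / M_{n-1}` is not a free `A`-module.  Then `M_f = A_f ⊗_A M` is a free
`A_f`-module. -/
theorem localization_free_of_filtration (A M : Type) [CommRing A] [AddCommGroup M]
    [Module A M] (F : ℕ → Submodule A M)
    (hbot : F 0 = ⊥) (hmono : Monotone F) (hsup : ⨆ n, F n = ⊤)
    (f : A) (hf : ¬ IsNilpotent f)
    (hstep : ∀ n : ℕ,
      ¬ Module.Free A (↥(F (n + 1)) ⧸ (F n).comap (F (n + 1)).subtype) →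
      ∀ m ∈ F (n + 1), f • m ∈ F n) :
    Module.Free (Localization (Submonoid.powers f))
      (LocalizedModule (Submonoid.powers f) M) := by
  classical
  set p : Submonoid A := Submonoid.powers f with hp
  set R := Localization p with hR
  set N := LocalizedModule p M with hN
  set ℓ := LocalizedModule.mkLinearMap p M with hℓ
  set F' : ℕ → Submodule R N := fun n => (F n).localized' R p ℓ with hF'
  have hbot' : F' 0 = ⊥ := by
    show (F 0).localized' R p ℓ = ⊥
    rw [hbot]
    exact Submodule.localized'_bot R p ℓ
  have hmono' : Monotone F' := by
    intro a b hab x hx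
    obtain ⟨m, hm, s, rfl⟩ := hx
    exact ⟨m, hmono hab hm, s, rfl⟩
  have hsup' : ⨆ n, F' n = ⊤ := by
    rw [← top_le_iff]
    intro x _
    induction x using LocalizedModule.induction_on with
    | _ m s =>
      have hm : m ∈ ⨆ n, F n := hsup ▸ Submodule.mem_top
      obtain ⟨n, hn⟩ := (Submodule.mem_iSup_of_directed _ hmono.directed_le).mp hm
      exact Submodule.mem_iSup_of_mem n ⟨m, hn, s, (IsLocalizedModule.mk_eq_mk' s m).symm⟩
  have hfree' : ∀ n, Module.Free R (↥(F' (n + 1)) ⧸ (F' n).comap (F' (n + 1)).subtype) := by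
    intro n
    by_cases hQ : Module.Free A (↥(F (n + 1)) ⧸ (F n).comap (F (n + 1)).subtype)
    · -- free quotient: localize it
      set g := (F (n + 1)).toLocalized' R p ℓ with hg
      set K := (F n).comap (F (n + 1)).subtype with hK0
      have val_mk' : ∀ (m : ↥(F (n + 1))) (s : p),
          ((IsLocalizedModule.mk' g m s : ↥(F' (n + 1))) : N)
            = IsLocalizedModule.mk' ℓ (m : M) s := by
        intro m s
        apply IsLocalizedModule.smul_injective ℓ s
        show s • ((IsLocalizedModule.mk' g m s : ↥(F' (n + 1))) : N)
          = s • IsLocalizedModule.mk' ℓ (m : M) s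
        rw [IsLocalizedModule.mk'_cancel']
        have h1 : (s • IsLocalizedModule.mk' g m s : ↥(F' (n + 1))) = g m :=
          IsLocalizedModule.mk'_cancel' g m s
        have h2 : s • ((IsLocalizedModule.mk' g m s : ↥(F' (n + 1))) : N)
            = ((s • IsLocalizedModule.mk' g m s : ↥(F' (n + 1))) : N) := rfl
        rw [h2, h1]
        rfl
      have hK : K.localized' R p g = (F' n).comap (F' (n + 1)).subtype := by
        ext x
        simp only [Submodule.mem_localized', Submodule.mem_comap, Submodule.subtype_apply]
        constructor
        · rintro ⟨m, hm, s, rfl⟩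
          rw [val_mk']
          exact ⟨(m : M), hm, s, rfl⟩
        · intro hx
          obtain ⟨m, hm, s, hms⟩ := hx
          refine ⟨⟨m, hmono (Nat.le_succ n) hm⟩, hm, s, ?_⟩
          apply Subtype.ext
          rw [val_mk']
          exact hms
      letI : Module.Free A (↥(F (n + 1)) ⧸ K) := hQ
      have hres : Module.Free R (↥(F' (n + 1)) ⧸ K.localized' R p g) :=
        Module.free_of_isLocalizedModule p (K.toLocalizedQuotient' R p g)
      rwa [hK] at hres
    · -- non-free quotient: localization collapses
      have hle : F' (n + 1) ≤ F' n := by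
        rintro x ⟨m, hm, s, rfl⟩
        let fS : p := ⟨f, 1, pow_one f⟩
        refine ⟨f • m, hstep n hQ m hm, fS * s, ?_⟩
        have hcan := IsLocalizedModule.mk'_cancel_left ℓ m fS s
        rwa [show fS • m = f • m from rfl] at hcan
      have htop : (F' n).comap (F' (n + 1)).subtype = ⊤ :=
        Submodule.comap_subtype_eq_top.mpr hle
      haveI : Subsingleton (↥(F' (n + 1)) ⧸ (F' n).comap (F' (n + 1)).subtype) :=
        Submodule.Quotient.subsingleton_iff.mpr htop
      infer_instance
  exact free_of_filtration F' hbot' hmono' hsup' hfree'
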